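/- In the two-dimensional yarmulke Morse geometry the metric factorises as g_p(w,w) = −4(√(ζ−1)(p·w) − (p×w))(√(ζ−1)(p·w) + (p×w)) for every p ∈ N and w ∈ ℝ², where p·w is the Euclidean inner product and p×w = p₁w₂ − p₂w₁. Consequently, for any r₀ > 0 the logarithmic spirals t ↦ r₀ e^{t/√(ζ−1)}(cos t, sin t) and t ↦ r₀ e^{t/√(ζ−1)}(cos(−t), sin(−t)) are null curves (g(γ',γ') ≡ 0) whose tangent vectors satisfy the future-pointing condition p·γ'(t) > 0. -/

import Mathlib

noncomputable section

open Set

/-- The punctured disc `N = {p : 0 < |p| < ε}` (Euclidean norm). -/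
def NY (ε : ℝ) : Set (ℝ × ℝ) :=
  {p | 0 < p.1 ^ 2 + p.2 ^ 2 ∧ p.1 ^ 2 + p.2 ^ 2 < ε ^ 2}

/-- Euclidean dot product on ℝ². -/
def dot2 (a b : ℝ × ℝ) : ℝ := a.1 * b.1 + a.2 * b.2

/-- Planar cross product `p × w = p₁w₂ − p₂w₁`. -/
def cross2 (a b : ℝ × ℝ) : ℝ := a.1 * b.2 - a.2 * b.1

/-- The yarmulke Morse metric (quadratic form) built from `f(p) = |p|²`:
`g_p(w,w) = 4|p|²|w|² − 4ζ(p·w)²`. -/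
def gY (ζ : ℝ) (p w : ℝ × ℝ) : ℝ :=
  4 * dot2 p p * dot2 w w - 4 * ζ * dot2 p w ^ 2

/-- A future-directed timelike curve: a C¹ curve in `N` with everywhere timelike
tangent satisfying the future-pointing condition `γ(t)·γ'(t) > 0`. -/
def TimelikeY (ζ ε : ℝ) (γ γ' : ℝ → ℝ × ℝ) : Prop :=
  (∀ t ∈ Icc (0 : ℝ) 1, HasDerivAt γ (γ' t) t) ∧
  ContinuousOn γ' (Icc (0 : ℝ) 1) ∧
  (∀ t ∈ Icc (0 : ℝ) 1, γ t ∈ NY ε) ∧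
  (∀ t ∈ Icc (0 : ℝ) 1, gY ζ (γ t) (γ' t) < 0) ∧
  (∀ t ∈ Icc (0 : ℝ) 1, 0 < dot2 (γ t) (γ' t))

/-- The chronology relation `q ≪ p`. -/
def chronY (ζ ε : ℝ) (q p : ℝ × ℝ) : Prop :=
  ∃ γ γ', TimelikeY ζ ε γ γ' ∧ γ 0 = q ∧ γ 1 = p

def IplusY (ζ ε : ℝ) (q : ℝ × ℝ) : Set (ℝ × ℝ) := {p ∈ NY ε | chronY ζ ε q p}

def IminusY (ζ ε : ℝ) (q : ℝ × ℝ) : Set (ℝ × ℝ) := {p ∈ NY ε | chronY ζ ε p q}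

/-- The angle `φ_p ∈ (−π, π]` of a point of the plane. -/
def ang (p : ℝ × ℝ) : ℝ := Complex.arg ((p.1 : ℂ) + (p.2 : ℂ) * Complex.I)

/-- the yarmulke metric factorises as
`g_p(w,w) = −4(√(ζ−1)(p·w) − p×w)(√(ζ−1)(p·w) + p×w)`, and consequently the two
logarithmic spirals `t ↦ r₀e^{t/√(ζ−1)}(cos(±t), sin(±t))` are null curves with
future-pointing tangents. -/
theorem stmt5 (ζ ε : ℝ) (hζ : 1 < ζ) (hε : 0 < ε) (r0 : ℝ) (hr0 : 0 < r0) :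
    (∀ p ∈ NY ε, ∀ w : ℝ × ℝ,
      gY ζ p w =
        -4 * (Real.sqrt (ζ - 1) * dot2 p w - cross2 p w) *
          (Real.sqrt (ζ - 1) * dot2 p w + cross2 p w)) ∧
    (∀ t : ℝ,
      DifferentiableAt ℝ
        (fun s : ℝ =>
          ((r0 * Real.exp (s / Real.sqrt (ζ - 1)) * Real.cos s,
            r0 * Real.exp (s / Real.sqrt (ζ - 1)) * Real.sin s) : ℝ × ℝ)) t ∧
      gY ζ
        (r0 * Real.exp (t / Real.sqrt (ζ - 1)) * Real.cos t,
          r0 * Real.exp (t / Real.sqrt (ζ - 1)) * Real.sin t)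
        (deriv (fun s : ℝ =>
          ((r0 * Real.exp (s / Real.sqrt (ζ - 1)) * Real.cos s,
            r0 * Real.exp (s / Real.sqrt (ζ - 1)) * Real.sin s) : ℝ × ℝ)) t) = 0 ∧
      0 < dot2
        (r0 * Real.exp (t / Real.sqrt (ζ - 1)) * Real.cos t,
          r0 * Real.exp (t / Real.sqrt (ζ - 1)) * Real.sin t)
        (deriv (fun s : ℝ =>
          ((r0 * Real.exp (s / Real.sqrt (ζ - 1)) * Real.cos s,
            r0 * Real.exp (s / Real.sqrt (ζ - 1)) * Real.sin s) : ℝ × ℝ)) t)) ∧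
    (∀ t : ℝ,
      DifferentiableAt ℝ
        (fun s : ℝ =>
          ((r0 * Real.exp (s / Real.sqrt (ζ - 1)) * Real.cos (-s),
            r0 * Real.exp (s / Real.sqrt (ζ - 1)) * Real.sin (-s)) : ℝ × ℝ)) t ∧
      gY ζ
        (r0 * Real.exp (t / Real.sqrt (ζ - 1)) * Real.cos (-t),
          r0 * Real.exp (t / Real.sqrt (ζ - 1)) * Real.sin (-t))
        (deriv (fun s : ℝ =>
          ((r0 * Real.exp (s / Real.sqrt (ζ - 1)) * Real.cos (-s),
            r0 * Real.exp (s / Real.sqrt (ζ - 1)) * Real.sin (-s)) : ℝ × ℝ)) t) = 0 ∧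
      0 < dot2
        (r0 * Real.exp (t / Real.sqrt (ζ - 1)) * Real.cos (-t),
          r0 * Real.exp (t / Real.sqrt (ζ - 1)) * Real.sin (-t))
        (deriv (fun s : ℝ =>
          ((r0 * Real.exp (s / Real.sqrt (ζ - 1)) * Real.cos (-s),
            r0 * Real.exp (s / Real.sqrt (ζ - 1)) * Real.sin (-s)) : ℝ × ℝ)) t)) := by
  have hs0 : (0:ℝ) < ζ - 1 := by linarith
  set s := Real.sqrt (ζ - 1) with hsdef
  have hs2 : s ^ 2 = ζ - 1 := Real.sq_sqrt hs0.le
  have hs : 0 < s := Real.sqrt_pos.mpr hs0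
  have hsne : s ≠ 0 := hs.ne'
  have hfact : ∀ p w : ℝ × ℝ,
      gY ζ p w = -4 * (s * dot2 p w - cross2 p w) * (s * dot2 p w + cross2 p w) := by
    intro p w
    simp only [gY, dot2, cross2]
    linear_combination (4 * (p.1 * w.1 + p.2 * w.2) ^ 2) * hs2
  refine ⟨fun p _ w => hfact p w, ?_, ?_⟩
  · intro t
    have hd : HasDerivAt (fun u : ℝ => u / s) (1 / s) t := by
      simpa using (hasDerivAt_id t).div_const s
    have hre : HasDerivAt (fun u : ℝ => r0 * Real.exp (u / s))
        (r0 * (Real.exp (t / s) * (1 / s))) t := hd.exp.const_mul r0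
    have h1 := hre.mul (Real.hasDerivAt_cos t)
    have h2 := hre.mul (Real.hasDerivAt_sin t)
    have hγ : HasDerivAt (fun u : ℝ => ((r0 * Real.exp (u / s) * Real.cos u, r0 * Real.exp (u / s) * Real.sin u) : ℝ × ℝ)) _ t := HasDerivAt.prodMk h1 h2
    refine ⟨hγ.differentiableAt, ?_, ?_⟩ <;> rw [hγ.deriv]
    · rw [hfact]
      have hz : s * dot2
            (r0 * Real.exp (t / s) * Real.cos t, r0 * Real.exp (t / s) * Real.sin t)
            (r0 * (Real.exp (t / s) * (1 / s)) * Real.cos t + r0 * Real.exp (t / s) * -Real.sin t,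
             r0 * (Real.exp (t / s) * (1 / s)) * Real.sin t + r0 * Real.exp (t / s) * Real.cos t) -
          cross2
            (r0 * Real.exp (t / s) * Real.cos t, r0 * Real.exp (t / s) * Real.sin t)
            (r0 * (Real.exp (t / s) * (1 / s)) * Real.cos t + r0 * Real.exp (t / s) * -Real.sin t,
             r0 * (Real.exp (t / s) * (1 / s)) * Real.sin t + r0 * Real.exp (t / s) * Real.cos t)
            = 0 := by
        simp only [dot2, cross2]
        field_simp
        ring
      rw [hz]
      ring
    · have hsc := Real.sin_sq_add_cos_sq t
      have hE : (0:ℝ) < Real.exp (t / s) := Real.exp_pos _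
      have hpos : 0 < r0 ^ 2 * Real.exp (t / s) ^ 2 / s := by positivity
      simp only [dot2]
      convert hpos using 1
      field_simp
      linear_combination hsc
  · intro t
    have hd : HasDerivAt (fun u : ℝ => u / s) (1 / s) t := by
      simpa using (hasDerivAt_id t).div_const s
    have hre : HasDerivAt (fun u : ℝ => r0 * Real.exp (u / s))
        (r0 * (Real.exp (t / s) * (1 / s))) t := hd.exp.const_mul r0
    have hneg : HasDerivAt (fun u : ℝ => -u) (-1 : ℝ) t := by
      simpa using hasDerivAt_neg' (x := t)
    have hc : HasDerivAt (fun u : ℝ => Real.cos (-u)) (-Real.sin (-t) * (-1)) t :=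
      (Real.hasDerivAt_cos (-t)).comp t hneg
    have hsn : HasDerivAt (fun u : ℝ => Real.sin (-u)) (Real.cos (-t) * (-1)) t :=
      (Real.hasDerivAt_sin (-t)).comp t hneg
    have h1 := hre.mul hc
    have h2 := hre.mul hsn
    have hγ : HasDerivAt (fun u : ℝ => ((r0 * Real.exp (u / s) * Real.cos (-u), r0 * Real.exp (u / s) * Real.sin (-u)) : ℝ × ℝ)) _ t := HasDerivAt.prodMk h1 h2
    refine ⟨hγ.differentiableAt, ?_, ?_⟩ <;> rw [hγ.deriv]
    · rw [hfact]
      have hz : s * dot2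
            (r0 * Real.exp (t / s) * Real.cos (-t), r0 * Real.exp (t / s) * Real.sin (-t))
            (r0 * (Real.exp (t / s) * (1 / s)) * Real.cos (-t) +
               r0 * Real.exp (t / s) * (-Real.sin (-t) * (-1)),
             r0 * (Real.exp (t / s) * (1 / s)) * Real.sin (-t) +
               r0 * Real.exp (t / s) * (Real.cos (-t) * (-1))) +
          cross2
            (r0 * Real.exp (t / s) * Real.cos (-t), r0 * Real.exp (t / s) * Real.sin (-t))
            (r0 * (Real.exp (t / s) * (1 / s)) * Real.cos (-t) +
               r0 * Real.exp (t / s) * (-Real.sin (-t) * (-1)),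
             r0 * (Real.exp (t / s) * (1 / s)) * Real.sin (-t) +
               r0 * Real.exp (t / s) * (Real.cos (-t) * (-1)))
            = 0 := by
        simp only [dot2, cross2]
        field_simp
        ring
      rw [hz]
      ring
    · have hsc := Real.sin_sq_add_cos_sq t
      have hE : (0:ℝ) < Real.exp (t / s) := Real.exp_pos _
      have hpos : 0 < r0 ^ 2 * Real.exp (t / s) ^ 2 / s := by positivity
      simp only [dot2]
      convert hpos using 1
      simp only [Real.cos_neg, Real.sin_neg]
      field_simp
      linear_combination hsc
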